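/- arXiv:1007.1004 — 2 statements merged into one kernel-verified Lean document; each statement's English description precedes it below -/
import Mathlib

section
/- Let (λ_n)_{n≥1} be positive reals, δ > 0, and (p_n)_{n≥1}, (φ_n)_{n≥1} continuously differentiable functions on [0,∞) with φ_n(t) = ∑_{j=1}^n p_j(t) and φ_n'(t) = λ_n(p_{n+1}(t) − p_n(t)) for all n, t. Suppose p_1(t_0) = δ for some t_0 ≥ 0, all p_n(0) = 0, and each p_n is continuous. Define t_n := inf{t : φ_n(t) ≥ nδ}. If each t_n is finite and attained, then for all n ≥ 1, t_{n+1} ≤ t_n and p_{n+1}(t_{n+1}) ≥ δ. -/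
theorem stmt_2 (lam : ℕ → ℝ) (delta : ℝ) (p phi : ℕ → ℝ → ℝ) (t0 : ℝ)
    (hlam_pos : ∀ n, 1 ≤ n → 0 < lam n) (hdelta : 0 < delta)
    (hphi : ∀ n, ∀ t : ℝ, phi n t = ∑ j ∈ Finset.Icc 1 n, p j t)
    (hderiv : ∀ n, 1 ≤ n → ∀ t : ℝ,
      HasDerivAt (phi n) (lam n * (p (n + 1) t - p n t)) t)
    (hcont : ∀ n, Continuous (p n))
    (ht0 : 0 ≤ t0) (hp1 : p 1 t0 = delta)
    (hinit : ∀ n, p n 0 = 0)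
    (tn : ℕ → ℝ)
    (htn_def : ∀ n, 1 ≤ n → tn n = sInf {t : ℝ | 0 ≤ t ∧ (n : ℝ) * delta ≤ phi n t})
    (htn_attained : ∀ n, 1 ≤ n → 0 ≤ tn n ∧ (n : ℝ) * delta ≤ phi n (tn n)) :
    ∀ n, 1 ≤ n → tn (n + 1) ≤ tn n ∧ delta ≤ p (n + 1) (tn (n + 1)) := by
  have hphi0 : ∀ n, phi n 0 = 0 := by
    intro n
    rw [hphi]
    exact Finset.sum_eq_zero fun j _ => hinit j
  have hbdd : ∀ n : ℕ, BddBelow {t : ℝ | 0 ≤ t ∧ (n : ℝ) * delta ≤ phi n t} :=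
    fun n => ⟨0, fun t ht => ht.1⟩
  -- before tn n, phi n is strictly below n * delta
  have hkey : ∀ n, 1 ≤ n → ∀ t : ℝ, 0 ≤ t → t < tn n → phi n t < (n : ℝ) * delta := by
    intro n hn t ht hlt
    by_contra h
    push_neg at h
    have : tn n ≤ t := by
      rw [htn_def n hn]
      exact csInf_le (hbdd n) ⟨ht, h⟩
    linarith
  have hpos : ∀ n, 1 ≤ n → 0 < tn n := by
    intro n hn
    rcases htn_attained n hn with ⟨h0, h1⟩
    rcases lt_or_eq_of_le h0 with h | h
    · exact h
    · exfalso
      rw [← h, hphi0] at h1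
      have hn' : (1 : ℝ) ≤ (n : ℝ) := by exact_mod_cast hn
      nlinarith
  have hcontphi : ∀ n, Continuous (phi n) := by
    intro n
    have : phi n = fun t => ∑ j ∈ Finset.Icc 1 n, p j t := funext (hphi n)
    rw [this]
    exact continuous_finset_sum _ fun j _ => hcont j
  -- phi n (tn n) = n * delta
  have heq : ∀ n, 1 ≤ n → phi n (tn n) = (n : ℝ) * delta := by
    intro n hn
    refine le_antisymm ?_ (htn_attained n hn).2
    have hne : (nhdsWithin (tn n) (Set.Iio (tn n))).NeBot := nhdsLT_neBot _
    refine le_of_tendsto (((hcontphi n).continuousAt).continuousWithinAt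
      (s := Set.Iio (tn n))) ?_
    filter_upwards [Ioo_mem_nhdsLT_of_mem (Set.mem_Ioc.2 ⟨hpos n hn, le_refl _⟩)] with t ht
    exact le_of_lt (hkey n hn t (le_of_lt ht.1) ht.2)
  -- phi n is ≤ n δ on [0, tn n]
  have hle : ∀ n, 1 ≤ n → ∀ t : ℝ, 0 ≤ t → t ≤ tn n → phi n t ≤ (n : ℝ) * delta := by
    intro n hn t ht htle
    rcases lt_or_eq_of_le htle with h | h
    · exact le_of_lt (hkey n hn t ht h)
    · rw [h, heq n hn]
  -- derivative of phi n at tn n is nonnegative, hence p (n+1) (tn n) ≥ p n (tn n)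
  have hmonot : ∀ n, 1 ≤ n → p n (tn n) ≤ p (n + 1) (tn n) := by
    intro n hn
    have hd := hderiv n hn (tn n)
    rw [hasDerivAt_iff_tendsto_slope] at hd
    have hd' : Filter.Tendsto (slope (phi n) (tn n)) (nhdsWithin (tn n) (Set.Iio (tn n)))
        (nhds (lam n * (p (n + 1) (tn n) - p n (tn n)))) := by
      refine hd.mono_left (nhdsWithin_mono _ ?_)
      intro t ht
      exact ne_of_lt ht
    have hne : (nhdsWithin (tn n) (Set.Iio (tn n))).NeBot := nhdsLT_neBot _
    have hnonneg : 0 ≤ lam n * (p (n + 1) (tn n) - p n (tn n)) := by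
      refine ge_of_tendsto hd' ?_
      filter_upwards [Ioo_mem_nhdsLT_of_mem (Set.mem_Ioc.2 ⟨hpos n hn, le_refl _⟩)] with t ht
      rw [slope_def_field]
      have h1 : phi n t < (n : ℝ) * delta := hkey n hn t (le_of_lt ht.1) ht.2
      have h2 : (n : ℝ) * delta ≤ phi n (tn n) := (htn_attained n hn).2
      rw [div_nonneg_iff]
      right
      constructor <;> [linarith; linarith [ht.2]]
    have hl := hlam_pos n hn
    nlinarith
  -- sum splitting
  have hsplit : ∀ n, 1 ≤ n → ∀ t : ℝ, phi (n + 1) t = phi n t + p (n + 1) t := by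
    intro n hn t
    rw [hphi, hphi, Finset.sum_Icc_succ_top (by omega : 1 ≤ n + 1)]
  -- main induction: delta ≤ p n (tn n), and tn (n+1) ≤ tn n
  have main : ∀ n, 1 ≤ n → delta ≤ p n (tn n) := by
    intro n
    induction n with
    | zero => omega
    | succ m ih =>
      intro _
      rcases Nat.eq_zero_or_pos m with hm | hm
      · -- base case n = 1
        subst hm
        have h := (htn_attained 1 le_rfl).2
        rw [hphi] at h
        simpa using h
      · -- inductive step: m ≥ 1
        have hQ := ih hm
        have h1 : delta ≤ p (m + 1) (tn m) := le_trans hQ (hmonot m hm)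
        have h2 : ((m : ℝ) + 1) * delta ≤ phi (m + 1) (tn m) := by
          rw [hsplit m hm]
          have := (htn_attained m hm).2
          nlinarith
        have hmem : tn m ∈ {t : ℝ | 0 ≤ t ∧ ((m + 1 : ℕ) : ℝ) * delta ≤ phi (m + 1) t} := by
          refine ⟨(htn_attained m hm).1, ?_⟩
          push_cast
          exact h2
        have hmono : tn (m + 1) ≤ tn m := by
          rw [htn_def (m + 1) (by omega)]
          exact csInf_le (hbdd (m + 1)) hmem
        have h3 : ((m + 1 : ℕ) : ℝ) * delta ≤ phi (m + 1) (tn (m + 1)) :=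
          (htn_attained (m + 1) (by omega)).2
        have h4 : phi m (tn (m + 1)) ≤ (m : ℝ) * delta :=
          hle m hm _ (htn_attained (m + 1) (by omega)).1 hmono
        have h5 := hsplit m hm (tn (m + 1))
        push_cast at h3
        linarith
  intro n hn
  constructor
  · -- tn (n+1) ≤ tn n
    have hQ := main n hn
    have h1 : delta ≤ p (n + 1) (tn n) := le_trans hQ (hmonot n hn)
    have h2 : ((n : ℝ) + 1) * delta ≤ phi (n + 1) (tn n) := by
      rw [hsplit n hn]
      have := (htn_attained n hn).2
      nlinarith
    rw [htn_def (n + 1) (by omega)]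
    refine csInf_le (hbdd (n + 1)) ⟨(htn_attained n hn).1, ?_⟩
    push_cast
    exact h2
  · exact main (n + 1) (by omega)
end

section
/- Let (T_n)_{n≥1} be nonnegative random variables on a probability space such that T_n has exponential distribution with mean ν_n > 0 (no independence assumed), with ν_∞ := ∑_n ν_n < ∞ and H := −∑_n ν_n log ν_n finite. Set τ := ∑_{n=1}^∞ T_n and h := H/ν_∞ + log ν_∞. Then for all t ≥ 0, P(T_1 > t) = e^{−t/ν_1} ≤ P(τ > t) and P(τ > t) ≤ e^{−t/ν_∞ + h}. -/
open MeasureTheory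

private lemma exp_lintegral_aux {ν : ℝ} (hν : 0 < ν) :
    ∫⁻ t in Set.Ioi (0:ℝ), ENNReal.ofReal (Real.exp (-t / ν)) = ENNReal.ofReal ν := by
  have hb : 0 < ν⁻¹ := inv_pos.2 hν
  have hint : IntegrableOn (fun t : ℝ => Real.exp (-ν⁻¹ * t)) (Set.Ioi 0) :=
    exp_neg_integrableOn_Ioi 0 hb
  have heq : ∀ t : ℝ, Real.exp (-t / ν) = Real.exp (-ν⁻¹ * t) := by
    intro t; rw [neg_div, div_eq_inv_mul, neg_mul]
  calc ∫⁻ t in Set.Ioi (0:ℝ), ENNReal.ofReal (Real.exp (-t / ν))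
      = ∫⁻ t in Set.Ioi (0:ℝ), ENNReal.ofReal (Real.exp (-ν⁻¹ * t)) := by
        simp_rw [heq]
    _ = ENNReal.ofReal (∫ t in Set.Ioi (0:ℝ), Real.exp (-ν⁻¹ * t)) := by
        rw [← ofReal_integral_eq_lintegral_ofReal hint
          (Filter.Eventually.of_forall fun t => (Real.exp_pos _).le)]
    _ = ENNReal.ofReal ν := by
        have h2 : (fun t : ℝ => Real.exp (-ν⁻¹ * t)) =
            fun t : ℝ => (fun x => Real.exp (-x)) (ν⁻¹ * t) := by
          funext t; rw [neg_mul]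
        rw [h2, integral_comp_mul_left_Ioi (fun x => Real.exp (-x)) 0 hb]
        simp [Real.exp_zero, integral_exp_neg_Ioi, integral_exp_Iic_zero]

theorem stmt_6 {Ω : Type*} [MeasurableSpace Ω] (P : Measure Ω) [IsProbabilityMeasure P]
    (T : ℕ → Ω → ℝ) (hTmeas : ∀ n, Measurable (T n))
    (hTnonneg : ∀ n ω, 0 ≤ T n ω)
    (nu : ℕ → ℝ) (hnu : ∀ n, 0 < nu n) (hsum : Summable nu)
    (hlog : Summable (fun n => nu n * Real.log (nu n)))
    (hexp : ∀ n, ∀ t : ℝ, 0 ≤ t →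
      (P {ω | t < T n ω}).toReal = Real.exp (-t / nu n))
    (nuinf H h : ℝ) (hnuinf : nuinf = ∑' n, nu n)
    (hH : H = -∑' n, nu n * Real.log (nu n))
    (hh : h = H / nuinf + Real.log nuinf)
    (tau : Ω → ℝ) (htau : ∀ ω, tau ω = ∑' n, T n ω) :
    ∀ t : ℝ, 0 ≤ t →
      (P {ω | t < T 0 ω}).toReal = Real.exp (-t / nu 0) ∧
      Real.exp (-t / nu 0) ≤ (P {ω | t < tau ω}).toReal ∧
      (P {ω | t < tau ω}).toReal ≤ Real.exp (-t / nuinf + h) := by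
  have hnuinf_pos : 0 < nuinf := by
    rw [hnuinf]
    exact lt_of_lt_of_le (hnu 0) (Summable.le_tsum hsum 0 fun j _ => (hnu j).le)
  -- P {t < T n} = ofReal (exp (-t / nu n)) for t ≥ 0
  have hPexp : ∀ n, ∀ t : ℝ, 0 ≤ t →
      P {ω | t < T n ω} = ENNReal.ofReal (Real.exp (-t / nu n)) := by
    intro n t ht
    rw [← hexp n t ht, ENNReal.ofReal_toReal (measure_ne_top P _)]
  -- a.e. summability of (T n ω)
  have hae : ∀ᵐ ω ∂P, Summable fun n => T n ω := by
    have hlin : ∀ n, ∫⁻ ω, ENNReal.ofReal (T n ω) ∂P = ENNReal.ofReal (nu n) := by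
      intro n
      rw [lintegral_eq_lintegral_meas_lt P
        (Filter.Eventually.of_forall fun ω => hTnonneg n ω) (hTmeas n).aemeasurable]
      rw [← exp_lintegral_aux (hnu n)]
      refine setLIntegral_congr_fun measurableSet_Ioi ?_
      exact fun t ht => hPexp n t (le_of_lt ht)
    have hgm : Measurable fun ω => ∑' n, ENNReal.ofReal (T n ω) :=
      Measurable.ennreal_tsum fun n => (hTmeas n).ennreal_ofReal
    have hlt : ∫⁻ ω, ∑' n, ENNReal.ofReal (T n ω) ∂P < ⊤ := by
      rw [lintegral_tsum fun n => (hTmeas n).ennreal_ofReal.aemeasurable]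
      simp_rw [hlin]
      calc ∑' n, ENNReal.ofReal (nu n) = ENNReal.ofReal (∑' n, nu n) :=
            (ENNReal.ofReal_tsum_of_nonneg (fun n => (hnu n).le) hsum).symm
        _ < ⊤ := ENNReal.ofReal_lt_top
    filter_upwards [ae_lt_top hgm hlt.ne] with ω hω
    have := ENNReal.summable_toReal hω.ne
    simpa [ENNReal.toReal_ofReal (hTnonneg _ ω)] using this
  intro t ht
  refine ⟨hexp 0 t ht, ?_, ?_⟩
  · -- lower bound
    rw [← hexp 0 t ht]
    have hmono : P {ω | t < T 0 ω} ≤ P {ω | t < tau ω} := by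
      apply measure_mono_ae
      filter_upwards [hae] with ω hω hT0
      have : T 0 ω ≤ ∑' n, T n ω := Summable.le_tsum hω 0 fun j _ => hTnonneg j ω
      exact lt_of_lt_of_le hT0 (by rwa [htau ω])
    exact ENNReal.toReal_mono (measure_ne_top P _) hmono
  · -- upper bound
    set a : ℕ → ℝ := fun n => nu n * ((t - H) / nuinf - Real.log (nu n)) with ha
    have hasum : Summable a := by
      have h1 : Summable fun n => nu n * ((t - H) / nuinf) :=
        hsum.mul_right _
      have h2 : Summable fun n => nu n * Real.log (nu n) := hlog
      have : Summable fun n => nu n * ((t - H) / nuinf) - nu n * Real.log (nu n) := h1.sub h2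
      refine this.congr fun n => ?_
      rw [ha]; ring
    have hatsum : ∑' n, a n = t := by
      have h1 : Summable fun n => nu n * ((t - H) / nuinf) := hsum.mul_right _
      have heq : a = fun n => nu n * ((t - H) / nuinf) - nu n * Real.log (nu n) := by
        funext n; rw [ha]; ring
      have hts : (∑' n, nu n * Real.log (nu n)) = -H := by rw [hH]; ring
      rw [heq, Summable.tsum_sub h1 hlog, tsum_mul_right, ← hnuinf, hts, mul_comm,
        div_mul_cancel₀ _ hnuinf_pos.ne']
      ring
    set b : ℕ → ℝ := fun n => Real.exp (-a n / nu n) with hb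
    have hbeq : ∀ n, b n = nu n * Real.exp ((H - t) / nuinf) := by
      intro n
      have key : -a n / nu n = (H - t) / nuinf + Real.log (nu n) := by
        rw [ha]
        simp only [neg_div]
        rw [mul_div_cancel_left₀ _ (hnu n).ne']
        ring
      simp only [hb]
      rw [key, Real.exp_add, Real.exp_log (hnu n)]
      ring
    have hbsum : Summable b := by
      refine Summable.congr (hsum.mul_right (Real.exp ((H - t) / nuinf))) fun n => ?_
      rw [hbeq n]
    have hbtsum : ∑' n, b n = Real.exp (-t / nuinf + h) := by
      calc ∑' n, b n = ∑' n, nu n * Real.exp ((H - t) / nuinf) := by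
            exact tsum_congr hbeq
        _ = nuinf * Real.exp ((H - t) / nuinf) := by rw [tsum_mul_right, ← hnuinf]
        _ = Real.exp (-t / nuinf + h) := by
            rw [hh, ← Real.exp_log hnuinf_pos, ← Real.exp_add]
            congr 1
            field_simp
            rw [Real.log_exp]
            ring
    -- union bound inclusion
    have hincl : {ω | t < tau ω} ⊆ ⋃ n, {ω | a n < T n ω} := by
      intro ω hω
      simp only [Set.mem_setOf_eq] at hω
      by_contra hcon
      simp only [Set.mem_iUnion, Set.mem_setOf_eq, not_exists, not_lt] at hcon
      rw [htau ω] at hω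
      by_cases hs : Summable fun n => T n ω
      · have : ∑' n, T n ω ≤ ∑' n, a n := Summable.tsum_le_tsum hcon hs hasum
        rw [hatsum] at this
        exact absurd hω (not_lt.2 this)
      · rw [tsum_eq_zero_of_not_summable hs] at hω
        exact absurd (lt_of_le_of_lt ht hω) (lt_irrefl 0)
    have hPn : ∀ n, P {ω | a n < T n ω} ≤ ENNReal.ofReal (b n) := by
      intro n
      by_cases han : 0 ≤ a n
      · rw [hPexp n (a n) han]
      · refine le_trans prob_le_one ?_
        rw [hb]
        have h1 : (1 : ℝ) ≤ Real.exp (-a n / nu n) := by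
          rw [← Real.exp_zero]
          apply Real.exp_le_exp.2
          exact div_nonneg (by linarith) (hnu n).le
        rw [← ENNReal.ofReal_one]
        exact ENNReal.ofReal_le_ofReal h1
    have hP : P {ω | t < tau ω} ≤ ENNReal.ofReal (Real.exp (-t / nuinf + h)) := by
      calc P {ω | t < tau ω} ≤ P (⋃ n, {ω | a n < T n ω}) := measure_mono hincl
        _ ≤ ∑' n, P {ω | a n < T n ω} := measure_iUnion_le _
        _ ≤ ∑' n, ENNReal.ofReal (b n) := ENNReal.tsum_le_tsum hPn
        _ = ENNReal.ofReal (∑' n, b n) := by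
            rw [ENNReal.ofReal_tsum_of_nonneg (fun n => (Real.exp_pos _).le) hbsum]
        _ = ENNReal.ofReal (Real.exp (-t / nuinf + h)) := by rw [hbtsum]
    calc (P {ω | t < tau ω}).toReal
        ≤ (ENNReal.ofReal (Real.exp (-t / nuinf + h))).toReal :=
          ENNReal.toReal_mono ENNReal.ofReal_ne_top hP
      _ = Real.exp (-t / nuinf + h) := ENNReal.toReal_ofReal (Real.exp_pos _).le
end
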